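/- Let ξ ∈ c₀* be nonsummable. (i) If η ∈ c₀* satisfies (η_a)_n ≥ (ξ_a)_n for all n, then for every ε > 0 there is N such that η_n ≥ (1 − ε)·ξ̂_n for all n ≥ N. (ii) For every ρ ∈ c₀* for which there exist no m ∈ ℕ and C > 0 with ρ_n ≤ C·ξ̂_{⌈n/m⌉} for all n, there exists η ∈ c₀* with (η_a)_n ≥ (ξ_a)_n for all n and for which there exist no m ∈ ℕ and C > 0 with ρ_n ≤ C·η_{⌈n/m⌉} for all n. -/

import Mathlib

/-!
Sequences are indexed by `ℕ` starting at 0: entry `n` is the `(n+1)`-st term.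
`am ξ k = (∑_{j=0}^{k} ξ_j)/(k+1)` is the arithmetic mean (0-based), and
`nuIdx ξ n` is the least `k` with `∑_{j=0}^{k} ξ_j ≥ (n+1)·ξ_0`, so that
`hatSeq ξ n = (ξ_a)_{ν(ξ)_{n+1}}`, i.e. the 0-based version of `ξ̂`.
The ampliation `ξ̂_{⌈k/m⌉}` (1-based, `m ≥ 1`) becomes `n ↦ hatSeq ξ (n / m)`.
-/

/-- `ξ ∈ c₀*`: nonnegative, nonincreasing, converging to 0. -/
def IsC0Star (ξ : ℕ → ℝ) : Prop :=
  (∀ n, 0 ≤ ξ n) ∧ (∀ n, ξ (n + 1) ≤ ξ n) ∧ Filter.Tendsto ξ Filter.atTop (nhds 0)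

/-- The arithmetic mean `(ξ_a)_n = (1/n)∑_{j=1}^n ξ_j` (0-based indexing). -/
noncomputable def am (ξ : ℕ → ℝ) (n : ℕ) : ℝ :=
  (∑ j ∈ Finset.range (n + 1), ξ j) / (n + 1)

/-- `nuIdx ξ n` is (the 0-based version of) `ν(ξ)_{n+1} := min{k ≥ 1 : ∑_{i=1}^k ξ_i ≥ (n+1)ξ₁}`. -/
noncomputable def nuIdx (ξ : ℕ → ℝ) (n : ℕ) : ℕ :=
  sInf {k : ℕ | (n + 1 : ℝ) * ξ 0 ≤ ∑ i ∈ Finset.range (k + 1), ξ i}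

/-- `ξ̂_n := (ξ_a)_{ν(ξ)_n}` (0-based indexing). -/
noncomputable def hatSeq (ξ : ℕ → ℝ) (n : ℕ) : ℝ := am ξ (nuIdx ξ n)

open Finset Filter

/-- partial sums -/
noncomputable def PS (ξ : ℕ → ℝ) (n : ℕ) : ℝ := ∑ j ∈ Finset.range (n + 1), ξ j

lemma am_eq (ξ : ℕ → ℝ) (n : ℕ) : am ξ n = PS ξ n / (n + 1) := rfl

section Aux
variable {ξ : ℕ → ℝ}

lemma xi_anti (hm : ∀ n, ξ (n+1) ≤ ξ n) : Antitone ξ := antitone_nat_of_succ_le hm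

lemma xi0_pos (hpos : ∀ n, 0 ≤ ξ n) (hm : ∀ n, ξ (n+1) ≤ ξ n) (hns : ¬ Summable ξ) :
    0 < ξ 0 := by
  rcases lt_or_eq_of_le (hpos 0) with h | h
  · exact h
  · exfalso
    apply hns
    have hz : ∀ n, ξ n = 0 := fun n =>
      le_antisymm ((xi_anti hm (Nat.zero_le n)).trans h.symm.le) (hpos n)
    rw [show ξ = fun _ => (0:ℝ) from funext hz]
    exact summable_zero

lemma PS_le_linear (hm : ∀ n, ξ (n+1) ≤ ξ n) (n : ℕ) : PS ξ n ≤ ((n:ℝ)+1) * ξ 0 := by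
  have : PS ξ n ≤ ∑ _j ∈ Finset.range (n+1), ξ 0 :=
    Finset.sum_le_sum fun j _ => xi_anti hm (Nat.zero_le j)
  rw [Finset.sum_const, card_range, nsmul_eq_mul] at this
  push_cast at this
  linarith

lemma PS_nonneg (hpos : ∀ n, 0 ≤ ξ n) (n : ℕ) : 0 ≤ PS ξ n :=
  Finset.sum_nonneg fun j _ => hpos j

lemma nuSet_nonempty (hpos : ∀ n, 0 ≤ ξ n) (hns : ¬ Summable ξ) (n : ℕ) :
    {k : ℕ | ((n:ℝ) + 1) * ξ 0 ≤ ∑ i ∈ Finset.range (k + 1), ξ i}.Nonempty := by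
  have ht := (not_summable_iff_tendsto_nat_atTop_of_nonneg hpos).1 hns
  obtain ⟨N, hN⟩ := eventually_atTop.mp (ht.eventually_ge_atTop (((n:ℝ)+1) * ξ 0))
  exact ⟨N, hN (N+1) (Nat.le_succ N)⟩

lemma nu_spec (hpos : ∀ n, 0 ≤ ξ n) (hns : ¬ Summable ξ) (n : ℕ) :
    ((n:ℝ)+1) * ξ 0 ≤ PS ξ (nuIdx ξ n) :=
  Nat.sInf_mem (nuSet_nonempty hpos hns n)

lemma nu_min (n j : ℕ) (h : j < nuIdx ξ n) : PS ξ j < ((n:ℝ)+1) * ξ 0 := by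
  have := Nat.notMem_of_lt_sInf h
  simp only [Set.mem_setOf_eq, not_le] at this
  exact this

lemma le_nu (hpos : ∀ n, 0 ≤ ξ n) (hm : ∀ n, ξ (n+1) ≤ ξ n) (hns : ¬ Summable ξ) (n : ℕ) :
    n ≤ nuIdx ξ n := by
  have h1 := (nu_spec hpos hns n).trans (PS_le_linear hm (nuIdx ξ n))
  have h0 := xi0_pos hpos hm hns
  have : ((n:ℝ)+1) ≤ ((nuIdx ξ n : ℝ)+1) := by
    by_contra hc
    push_neg at hc
    nlinarith
  have h2 : (n:ℝ) ≤ (nuIdx ξ n : ℝ) := by linarith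
  exact_mod_cast h2

end Aux
section Aux2
variable {ξ : ℕ → ℝ}

lemma xi_le_am (hm : ∀ n, ξ (n+1) ≤ ξ n) {n k : ℕ} (h : n ≤ k) : ξ k ≤ am ξ n := by
  have hsum : ((n:ℝ)+1) * ξ k ≤ PS ξ n := by
    have : ∑ _j ∈ Finset.range (n+1), ξ k ≤ PS ξ n :=
      Finset.sum_le_sum fun j hj => xi_anti hm (le_trans (Nat.le_of_lt_succ (Finset.mem_range.mp hj)) h)
    rw [Finset.sum_const, card_range, nsmul_eq_mul] at this
    push_cast at this
    linarith
  rw [am_eq]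
  rw [le_div_iff₀ (by positivity)]
  linarith

lemma am_nonneg (hpos : ∀ n, 0 ≤ ξ n) (n : ℕ) : 0 ≤ am ξ n := by
  rw [am_eq]
  exact div_nonneg (PS_nonneg hpos n) (by positivity)

lemma hat_eq (ξ : ℕ → ℝ) (n : ℕ) : hatSeq ξ n = PS ξ (nuIdx ξ n) / ((nuIdx ξ n : ℝ) + 1) := rfl

lemma hat_pos (hpos : ∀ n, 0 ≤ ξ n) (hm : ∀ n, ξ (n+1) ≤ ξ n) (hns : ¬ Summable ξ) (n : ℕ) :
    0 < hatSeq ξ n := by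
  rw [hat_eq]
  apply div_pos _ (by positivity)
  have h0 := xi0_pos hpos hm hns
  have := nu_spec hpos hns n
  nlinarith

lemma hat_nonneg (hpos : ∀ n, 0 ≤ ξ n) (n : ℕ) : 0 ≤ hatSeq ξ n := am_nonneg hpos _

lemma hat_zero (hpos : ∀ n, 0 ≤ ξ n) : hatSeq ξ 0 = ξ 0 := by
  have hν : nuIdx ξ 0 = 0 := by
    apply Nat.sInf_eq_zero.mpr
    left
    simp [PS]
  simp [hatSeq, hν, am]

/-- Lemma A : `S_j ≤ (q+1)ξ₀ + (j-q)·ξ̂_q` for `j ≥ q`. -/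
lemma key_bound (hpos : ∀ n, 0 ≤ ξ n) (hm : ∀ n, ξ (n+1) ≤ ξ n) (hns : ¬ Summable ξ)
    (q j : ℕ) (h : q ≤ j) :
    PS ξ j ≤ ((q:ℝ)+1) * ξ 0 + ((j:ℝ) - q) * hatSeq ξ q := by
  set ν := nuIdx ξ q with hνdef
  have hν : q ≤ ν := le_nu hpos hm hns q
  have hspec : ((q:ℝ)+1) * ξ 0 ≤ PS ξ ν := nu_spec hpos hns q
  have hhatn : 0 ≤ hatSeq ξ q := hat_nonneg hpos q
  have hPSν : PS ξ ν ≤ ((q:ℝ)+1) * ξ 0 + ((ν:ℝ) - q) * hatSeq ξ q := by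
    rcases eq_or_lt_of_le hν with he | hlt
    · have := PS_le_linear hm ν
      rw [← he] at this ⊢
      simp only [sub_self, zero_mul, add_zero]
      simpa using this
    · have hν1 : 1 ≤ ν := by omega
      have hsplit : PS ξ ν = PS ξ (ν-1) + ξ ν := by
        have : ν - 1 + 1 = ν := Nat.succ_pred_eq_of_pos hν1
        simp only [PS]
        rw [show ν + 1 = (ν - 1 + 1) + 1 by omega, Finset.sum_range_succ, this]
      have h1 : PS ξ (ν-1) < ((q:ℝ)+1) * ξ 0 := nu_min q (ν-1) (by omega)
      have h2 : ξ ν ≤ hatSeq ξ q := xi_le_am hm (le_refl ν)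
      have h3 : (1:ℝ) ≤ (ν:ℝ) - q := by
        have : (q:ℝ) + 1 ≤ (ν:ℝ) := by exact_mod_cast hlt
        linarith
      nlinarith
  rcases le_or_gt ν j with hj | hj
  · have hsplit : PS ξ j = PS ξ ν + ∑ i ∈ Finset.Ico (ν+1) (j+1), ξ i := by
      simp only [PS, Finset.range_eq_Ico]
      rw [← Finset.sum_Ico_consecutive ξ (Nat.zero_le (ν+1)) (by omega : ν + 1 ≤ j + 1)]
    have hbound : ∑ i ∈ Finset.Ico (ν+1) (j+1), ξ i ≤ ((j:ℝ) - ν) * hatSeq ξ q := by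
      have h1 : ∑ i ∈ Finset.Ico (ν+1) (j+1), ξ i
          ≤ ∑ _i ∈ Finset.Ico (ν+1) (j+1), hatSeq ξ q := by
        apply Finset.sum_le_sum
        intro i hi
        have hνi : ν ≤ i := le_of_lt (Finset.mem_Ico.mp hi).1
        exact xi_le_am hm hνi
      rw [Finset.sum_const, Nat.card_Ico, nsmul_eq_mul] at h1
      have hcard : ((j + 1 - (ν + 1) : ℕ) : ℝ) = (j:ℝ) - ν := by
        have : j + 1 - (ν + 1) = j - ν := by omega
        rw [this, Nat.cast_sub hj]
      rw [hcard] at h1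
      exact h1
    rw [hsplit]
    linarith
  · have h1 := nu_min q j hj
    have h2 : 0 ≤ ((j:ℝ) - q) * hatSeq ξ q := by
      apply mul_nonneg _ hhatn
      have hqj : (q:ℝ) ≤ (j:ℝ) := by exact_mod_cast h
      linarith
    linarith

end Aux2
section Aux3
variable {ξ : ℕ → ℝ}

lemma am_tendsto (hlim : Tendsto ξ atTop (nhds 0)) : Tendsto (am ξ) atTop (nhds 0) := by
  have h := hlim.cesaro
  have h2 : Tendsto (fun n : ℕ => ((n+1 : ℕ) : ℝ)⁻¹ * ∑ i ∈ Finset.range (n+1), ξ i)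
      atTop (nhds 0) := h.comp (tendsto_add_atTop_nat 1)
  apply h2.congr
  intro n
  rw [am_eq, PS, div_eq_inv_mul]
  push_cast
  ring

lemma nu_tendsto (hpos : ∀ n, 0 ≤ ξ n) (hm : ∀ n, ξ (n+1) ≤ ξ n) (hns : ¬ Summable ξ) :
    Tendsto (nuIdx ξ) atTop atTop :=
  tendsto_atTop_mono (le_nu hpos hm hns) tendsto_id

lemma hat_tendsto (hpos : ∀ n, 0 ≤ ξ n) (hm : ∀ n, ξ (n+1) ≤ ξ n)
    (hlim : Tendsto ξ atTop (nhds 0)) (hns : ¬ Summable ξ) :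
    Tendsto (hatSeq ξ) atTop (nhds 0) :=
  (am_tendsto hlim).comp (nu_tendsto hpos hm hns)

lemma chain_exists {α : Sort*} (s0 : α) (R : ℕ → α → α → Prop) (h : ∀ k a, ∃ b, R k a b) :
    ∃ f : ℕ → α, f 0 = s0 ∧ ∀ k, R k (f k) (f (k+1)) :=
  ⟨fun k => Nat.rec s0 (fun k a => Classical.choose (h k a)) k, rfl,
    fun k => Classical.choose_spec (h k _)⟩

lemma witness_unbounded {ρ : ℕ → ℝ} (hρpos : ∀ n, 0 ≤ ρ n)
    (hatpos : ∀ n, 0 < hatSeq ξ n)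
    (hyp : ¬ ∃ m : ℕ, 0 < m ∧ ∃ C : ℝ, 0 < C ∧ ∀ n, ρ n ≤ C * hatSeq ξ (n / m))
    (m : ℕ) (hm : 0 < m) (C : ℝ) (hC : 0 < C) (N : ℕ) :
    ∃ n, N ≤ n ∧ C * hatSeq ξ (n / m) < ρ n := by
  by_contra hcon
  push_neg at hcon
  apply hyp
  set S := ∑ i ∈ Finset.range N, ρ i / hatSeq ξ (i / m) with hS
  have hSnn : 0 ≤ S := Finset.sum_nonneg fun i _ => div_nonneg (hρpos i) (hatpos _).le
  refine ⟨m, hm, C + S, by linarith, fun n => ?_⟩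
  by_cases hn : N ≤ n
  · have h1 := hcon n hn
    nlinarith [(hatpos (n / m)).le]
  · push_neg at hn
    have h1 : ρ n / hatSeq ξ (n / m) ≤ S := by
      apply Finset.single_le_sum (f := fun i => ρ i / hatSeq ξ (i / m))
        (fun i _ => div_nonneg (hρpos i) (hatpos _).le) (Finset.mem_range.mpr hn)
    have h2 : ρ n = (ρ n / hatSeq ξ (n / m)) * hatSeq ξ (n / m) :=
      (div_mul_cancel₀ _ (hatpos _).ne').symm
    rw [h2]
    have := (hatpos (n/m)).le
    nlinarith

end Aux3
/-- Transition relation for the inductive construction in part (ii). -/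
def StepRel (ξ ρ : ℕ → ℝ) (k : ℕ) (s t : ℕ × ℕ) : Prop :=
  s.1 < t.1 ∧ t.2 ≤ t.1 ∧
  hatSeq ξ t.2 ≤ hatSeq ξ s.2 / 4 ∧
  ((t.2:ℝ)+1) * ξ 0 + ((t.1:ℝ) - t.2) * hatSeq ξ t.2
    ≤ ((s.2:ℝ)+1) * ξ 0 + ((s.1:ℝ) - s.2) * hatSeq ξ s.2
      + ((t.1:ℝ) - s.1 - 1) * hatSeq ξ s.2 + hatSeq ξ t.2 ∧
  ∃ n : ℕ, n / (k+1) = t.1 ∧ ((k:ℝ)+1) * hatSeq ξ t.2 < ρ n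

set_option maxHeartbeats 1000000 in
lemma step_exists {ξ ρ : ℕ → ℝ} (hpos : ∀ n, 0 ≤ ξ n) (hm : ∀ n, ξ (n+1) ≤ ξ n)
    (hlim : Tendsto ξ atTop (nhds 0)) (hns : ¬ Summable ξ)
    (hρpos : ∀ n, 0 ≤ ρ n)
    (hyp : ¬ ∃ m : ℕ, 0 < m ∧ ∃ C : ℝ, 0 < C ∧ ∀ n, ρ n ≤ C * hatSeq ξ (n / m))
    (k q p : ℕ) (hpq : p ≤ q) :
    ∃ t : ℕ × ℕ, StepRel ξ ρ k (q, p) t := by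
  have hatpos := hat_pos hpos hm hns
  set w := hatSeq ξ p with hwdef
  have hw : 0 < w := hatpos p
  have hξ0 : 0 < ξ 0 := xi0_pos hpos hm hns
  -- threshold for hatSeq ≤ w/4
  obtain ⟨T, hT⟩ : ∃ T, ∀ j, T ≤ j → hatSeq ξ j ≤ w / 4 := by
    have := (hat_tendsto hpos hm hlim hns).eventually
      (eventually_le_nhds (show (0:ℝ) < w/4 by linarith))
    obtain ⟨T, hT⟩ := eventually_atTop.mp this
    exact ⟨T, hT⟩
  -- choice of the ampliation factor m
  set m : ℕ := max (k+1) (⌈4*((k:ℝ)+1)*ξ 0 / w⌉₊ + 1) with hmdef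
  have hm1 : k + 1 ≤ m := le_max_left _ _
  have hm0 : 0 < m := by omega
  have hm2 : 4*((k:ℝ)+1)*ξ 0 ≤ (m:ℝ) * w := by
    have h1 : (4*((k:ℝ)+1)*ξ 0 / w) ≤ (⌈4*((k:ℝ)+1)*ξ 0 / w⌉₊ : ℝ) := Nat.le_ceil _
    have h2 : ((⌈4*((k:ℝ)+1)*ξ 0 / w⌉₊ : ℕ) : ℝ) ≤ (m:ℝ) := by
      have : (⌈4*((k:ℝ)+1)*ξ 0 / w⌉₊ : ℕ) ≤ m := by omega
      exact_mod_cast this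
    have h3 : 4*((k:ℝ)+1)*ξ 0 / w ≤ (m:ℝ) := h1.trans h2
    calc 4*((k:ℝ)+1)*ξ 0 = (4*((k:ℝ)+1)*ξ 0 / w) * w := by field_simp
    _ ≤ (m:ℝ) * w := mul_le_mul_of_nonneg_right h3 hw.le
  -- witness
  obtain ⟨n, hnN, hwit⟩ := witness_unbounded hρpos hatpos hyp m hm0 ((k:ℝ)+1)
    (by positivity) (max (m*(T+1)) ((k+1)*(2*q+3)))
  set q' := n / (k+1) with hq'def
  set p' := n / m with hp'def
  have hq'big : 2*q+3 ≤ q' := by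
    rw [hq'def]
    rw [Nat.le_div_iff_mul_le (Nat.succ_pos k)]
    calc (2*q+3) * (k+1) = (k+1)*(2*q+3) := by ring
    _ ≤ max (m*(T+1)) ((k+1)*(2*q+3)) := le_max_right _ _
    _ ≤ n := hnN
  have hqq' : q < q' := by omega
  have hp'q' : p' ≤ q' := Nat.div_le_div_left hm1 (Nat.succ_pos k)
  have hTp' : T ≤ p' := by
    have : T + 1 ≤ p' := by
      rw [hp'def, Nat.le_div_iff_mul_le hm0]
      calc (T+1) * m = m * (T+1) := by ring
      _ ≤ max (m*(T+1)) ((k+1)*(2*q+3)) := le_max_left _ _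
      _ ≤ n := hnN
    omega
  set w' := hatSeq ξ p' with hw'def
  have hw'4 : w' ≤ w / 4 := hT p' hTp'
  have hw'nn : 0 ≤ w' := (hatpos p').le
  refine ⟨(q', p'), hqq', hp'q', hw'4, ?_, ⟨n, rfl, hwit⟩⟩
  -- the numerical transition inequality
  have hp'm : (p':ℝ) * m ≤ (n:ℝ) := by exact_mod_cast Nat.div_mul_le_self n m
  have hnlt : (n:ℝ) < ((q':ℝ)+1) * (k+1) := by
    have : n < (q' + 1) * (k+1) := (Nat.div_lt_iff_lt_mul (Nat.succ_pos k)).mp (Nat.lt_succ_self q')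
    exact_mod_cast this
  -- p' * (4ξ₀) ≤ (q'+1) * w
  have h1 : (p':ℝ) * (4 * ξ 0) ≤ ((q':ℝ)+1) * w := by
    have e1 : (p':ℝ) * m * (4 * ξ 0) ≤ (n:ℝ) * (4 * ξ 0) :=
      mul_le_mul_of_nonneg_right hp'm (by positivity)
    have e2 : (n:ℝ) * (4 * ξ 0) ≤ ((q':ℝ)+1) * ((k:ℝ)+1) * (4 * ξ 0) := by
      have := mul_le_mul_of_nonneg_right hnlt.le (show (0:ℝ) ≤ 4 * ξ 0 by positivity)
      push_cast at this ⊢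
      nlinarith
    have e3 : ((q':ℝ)+1) * ((k:ℝ)+1) * (4 * ξ 0) ≤ ((q':ℝ)+1) * ((m:ℝ) * w) := by
      have hq'nn : (0:ℝ) ≤ (q':ℝ)+1 := by positivity
      have := mul_le_mul_of_nonneg_left hm2 hq'nn
      nlinarith
    have e4 : (p':ℝ) * (4 * ξ 0) * m ≤ ((q':ℝ)+1) * w * m := by
      have hmr : (0:ℝ) < (m:ℝ) := by exact_mod_cast hm0
      nlinarith
    have hmr : (0:ℝ) < (m:ℝ) := by exact_mod_cast hm0
    exact le_of_mul_le_mul_right e4 hmr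
  have h2 : ((q':ℝ) - p') * w' ≤ (q':ℝ) * (w/4) := by
    have hA : ((q':ℝ) - p') * w' ≤ (q':ℝ) * w' := by
      have : (0:ℝ) ≤ (p':ℝ) := by positivity
      nlinarith
    have hB : (q':ℝ) * w' ≤ (q':ℝ) * (w/4) :=
      mul_le_mul_of_nonneg_left hw'4 (by positivity)
    linarith
  have h3 : (0:ℝ) ≤ ((q:ℝ) - p) * w := by
    have : (p:ℝ) ≤ (q:ℝ) := by exact_mod_cast hpq
    nlinarith
  have h4 : (0:ℝ) ≤ (p:ℝ) * ξ 0 := by positivity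
  have h5 : (1:ℝ) * w ≤ (2*(q':ℝ) - 4*q - 5) * w := by
    apply mul_le_mul_of_nonneg_right _ hw.le
    have : (2*(q:ℕ)+3 : ℝ) ≤ (q':ℝ) := by exact_mod_cast hq'big
    linarith
  show ((p':ℝ)+1) * ξ 0 + ((q':ℝ) - p') * w'
      ≤ ((p:ℝ)+1) * ξ 0 + ((q:ℝ) - p) * w + ((q':ℝ) - q - 1) * w + w'
  linarith
lemma partI {ξ : ℕ → ℝ} (hξ : IsC0Star ξ) (hns : ¬ Summable ξ) :
    ∀ η : ℕ → ℝ, IsC0Star η → (∀ n, am ξ n ≤ am η n) →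
      ∀ ε : ℝ, 0 < ε → ∃ N : ℕ, ∀ n, N ≤ n → (1 - ε) * hatSeq ξ n ≤ η n := by
  obtain ⟨hpos, hm, hlim⟩ := hξ
  intro η hη hdom ε hε
  obtain ⟨hηpos, hηm, hηlim⟩ := hη
  by_cases hε1 : 1 ≤ ε
  · refine ⟨0, fun n _ => ?_⟩
    have h1 : (1 - ε) ≤ 0 := by linarith
    exact le_trans (mul_nonpos_of_nonpos_of_nonneg h1 (hat_nonneg hpos n)) (hηpos n)
  push_neg at hε1
  have hξ0 : 0 < ξ 0 := xi0_pos hpos hm hns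
  -- Cesàro: averages of η tend to 0
  have hc : Tendsto (fun q : ℕ => ((q:ℝ))⁻¹ * ∑ i ∈ Finset.range q, η i) atTop (nhds 0) :=
    hηlim.cesaro
  obtain ⟨N, hN⟩ := eventually_atTop.mp
    (hc.eventually (eventually_lt_nhds (show (0:ℝ) < ε * ξ 0 by positivity)))
  refine ⟨N + 1, fun q hq => ?_⟩
  by_contra hcon
  push_neg at hcon
  set ν := nuIdx ξ q with hνdef
  have hqν : q ≤ ν := le_nu hpos hm hns q
  have hspec : ((q:ℝ)+1) * ξ 0 ≤ PS ξ ν := nu_spec hpos hns q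
  have hhat : hatSeq ξ q = PS ξ ν / ((ν:ℝ) + 1) := rfl
  have hνpos : (0:ℝ) < (ν:ℝ) + 1 := by positivity
  have hPSν : PS ξ ν = ((ν:ℝ)+1) * hatSeq ξ q := by
    rw [hhat]; field_simp
  have hηq_nonneg : 0 ≤ η q := hηpos q
  have hatq_pos : 0 < hatSeq ξ q := hat_pos hpos hm hns q
  -- partial sum of η up to ν
  have hηanti : Antitone η := antitone_nat_of_succ_le hηm
  have hsplit : PS η ν = (∑ i ∈ Finset.range q, η i) + ∑ i ∈ Finset.Ico q (ν+1), η i := by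
    simp only [PS, Finset.range_eq_Ico]
    rw [← Finset.sum_Ico_consecutive η (Nat.zero_le q) (by omega : q ≤ ν + 1)]
  have hbound : ∑ i ∈ Finset.Ico q (ν+1), η i ≤ ((ν:ℝ) + 1 - q) * η q := by
    have h1 : ∑ i ∈ Finset.Ico q (ν+1), η i ≤ ∑ _i ∈ Finset.Ico q (ν+1), η q :=
      Finset.sum_le_sum fun i hi => hηanti (Finset.mem_Ico.mp hi).1
    rw [Finset.sum_const, Nat.card_Ico, nsmul_eq_mul] at h1
    have hcard : ((ν + 1 - q : ℕ) : ℝ) = (ν:ℝ) + 1 - q := by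
      rw [Nat.cast_sub (by omega)]
      push_cast
      ring
    rw [hcard] at h1
    exact h1
  -- small initial part
  have hqpos : (0:ℝ) < (q:ℝ) := by
    have : 1 ≤ q := by omega
    exact_mod_cast Nat.lt_of_lt_of_le Nat.zero_lt_one this
  have hinit : (∑ i ∈ Finset.range q, η i) < ε * ((q:ℝ)+1) * ξ 0 := by
    have h1 := hN q (by omega)
    have h2 : (∑ i ∈ Finset.range q, η i) = (q:ℝ) * ((q:ℝ)⁻¹ * ∑ i ∈ Finset.range q, η i) := by
      field_simp
    rw [h2]
    have h3 : (q:ℝ) * ((q:ℝ)⁻¹ * ∑ i ∈ Finset.range q, η i) < (q:ℝ) * (ε * ξ 0) :=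
      mul_lt_mul_of_pos_left h1 hqpos
    nlinarith
  -- combine
  have hqν' : (q:ℝ) ≤ (ν:ℝ) := by exact_mod_cast hqν
  have hkey : PS η ν < PS ξ ν := by
    have e1 : ε * ((q:ℝ)+1) * ξ 0 ≤ ε * PS ξ ν := by nlinarith
    have e2 : ((ν:ℝ) + 1 - q) * η q ≤ ((ν:ℝ) + 1 - q) * ((1-ε) * hatSeq ξ q) := by
      apply mul_le_mul_of_nonneg_left hcon.le (by linarith)
    have e3 : ((ν:ℝ) + 1 - q) * ((1-ε) * hatSeq ξ q) ≤ ((ν:ℝ) + 1) * ((1-ε) * hatSeq ξ q) := by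
      apply mul_le_mul_of_nonneg_right (by linarith)
      have : 0 ≤ 1 - ε := by linarith
      positivity
    rw [hsplit, hPSν]
    nlinarith
  have hcontra := hdom ν
  rw [am_eq, am_eq] at hcontra
  have := (div_le_div_iff_of_pos_right hνpos).mp (by exact_mod_cast hcontra)
  linarith
set_option maxHeartbeats 1000000 in
lemma partII {ξ : ℕ → ℝ} (hξ : IsC0Star ξ) (hns : ¬ Summable ξ) :
    ∀ ρ : ℕ → ℝ, IsC0Star ρ →
      (¬ ∃ m : ℕ, 0 < m ∧ ∃ C : ℝ, 0 < C ∧ ∀ n, ρ n ≤ C * hatSeq ξ (n / m)) →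
      ∃ η : ℕ → ℝ, IsC0Star η ∧ (∀ n, am ξ n ≤ am η n) ∧
        ¬ ∃ m : ℕ, 0 < m ∧ ∃ C : ℝ, 0 < C ∧ ∀ n, ρ n ≤ C * η (n / m) := by
  obtain ⟨hpos, hm, hlim⟩ := hξ
  intro ρ hρ hyp
  have hξ0 : 0 < ξ 0 := xi0_pos hpos hm hns
  have hatpos := hat_pos hpos hm hns
  -- build the chain
  have hstep : ∀ (k : ℕ) (s : {s : ℕ × ℕ // s.2 ≤ s.1}),
      ∃ t : {s : ℕ × ℕ // s.2 ≤ s.1}, StepRel ξ ρ k s.1 t.1 := by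
    intro k s
    obtain ⟨t, ht⟩ := step_exists hpos hm hlim hns hρ.1 hyp k s.1.1 s.1.2 s.2
    exact ⟨⟨t, ht.2.1⟩, ht⟩
  obtain ⟨f, hf0, hfR⟩ := chain_exists (⟨(0,0), le_rfl⟩ : {s : ℕ × ℕ // s.2 ≤ s.1})
    (fun k s t => StepRel ξ ρ k s.1 t.1) hstep
  set Q : ℕ → ℕ := fun k => (f k).1.1 with hQdef
  set Pp : ℕ → ℕ := fun k => (f k).1.2 with hPpdef
  set W : ℕ → ℝ := fun k => hatSeq ξ (Pp k) with hWdef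
  have hQ0 : Q 0 = 0 := by rw [hQdef]; simp [hf0]
  have hPp0 : Pp 0 = 0 := by rw [hPpdef]; simp [hf0]
  have hQlt : ∀ k, Q k < Q (k+1) := fun k => (hfR k).1
  have hQsm : StrictMono Q := strictMono_nat_of_lt_succ hQlt
  have hpq : ∀ k, Pp k ≤ Q k := by
    intro k
    cases k with
    | zero => rw [hQ0, hPp0]
    | succ k => exact (hfR k).2.1
  have hWsucc : ∀ k, W (k+1) ≤ W k / 4 := fun k => (hfR k).2.2.1
  have hWpos : ∀ k, 0 < W k := fun k => hatpos (Pp k)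
  have hWanti : Antitone W :=
    antitone_nat_of_succ_le fun k => (hWsucc k).trans (by linarith [hWpos k])
  have hTineq : ∀ k, ((Pp (k+1) : ℝ)+1) * ξ 0 + ((Q (k+1):ℝ) - Pp (k+1)) * W (k+1)
      ≤ ((Pp k:ℝ)+1) * ξ 0 + ((Q k:ℝ) - Pp k) * W k
        + ((Q (k+1):ℝ) - Q k - 1) * W k + W (k+1) := fun k => (hfR k).2.2.2.1
  have hwitn : ∀ k, ∃ n, n / (k+1) = Q (k+1) ∧ ((k:ℝ)+1) * W (k+1) < ρ n :=
    fun k => (hfR k).2.2.2.2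
  -- index function
  set K : ℕ → ℕ := fun n => Nat.findGreatest (fun k => Q k ≤ n) n with hKdef
  have hKge : ∀ k n, Q k ≤ n → k ≤ K n := by
    intro k n h
    exact Nat.le_findGreatest (le_trans (hQsm.le_apply) h) h
  have hKspec : ∀ n, Q (K n) ≤ n := by
    intro n
    have h0 : Q 0 ≤ n := by rw [hQ0]; exact Nat.zero_le n
    exact Nat.findGreatest_spec (P := fun k => Q k ≤ n) (Nat.zero_le n) h0
  have hKlt : ∀ n, n < Q (K n + 1) := by
    intro n
    by_contra h
    push_neg at h
    have := hKge (K n + 1) n h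
    omega
  have hKQ : ∀ k, K (Q k) = k := by
    intro k
    have h1 : k ≤ K (Q k) := hKge k (Q k) le_rfl
    have h2 : Q (K (Q k)) ≤ Q k := hKspec (Q k)
    exact le_antisymm (hQsm.le_iff_le.mp h2) h1
  have hKconst : ∀ k n, Q k ≤ n → n < Q (k+1) → K n = k := by
    intro k n h1 h2
    have h3 : Q (K n) < Q (k+1) := lt_of_le_of_lt (hKspec n) h2
    have h4 : K n < k + 1 := hQsm.lt_iff_lt.mp h3
    have h5 := hKge k n h1
    omega
  set η : ℕ → ℝ := fun n => W (K n) with hηdef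
  have hηQ : ∀ k, η (Q k) = W k := fun k => by rw [hηdef]; simp only []; rw [hKQ k]
  have hηv : ∀ k n, Q k ≤ n → n < Q (k+1) → η n = W k := by
    intro k n h1 h2
    rw [hηdef]; simp only []; rw [hKconst k n h1 h2]
  have hηnn : ∀ n, 0 ≤ η n := fun n => (hWpos (K n)).le
  have hKmono : Monotone K := by
    intro a b hab
    exact hKge (K a) b (le_trans (hKspec a) hab)
  have hηanti : Antitone η := fun a b hab => hWanti (hKmono hab)
  -- geometric decay of W
  have hW0 : W 0 = ξ 0 := by rw [hWdef]; simp only []; rw [hPp0]; exact hat_zero hpos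
  have hWgeo : ∀ k, W k ≤ ξ 0 * (1/2)^k := by
    intro k
    induction k with
    | zero => simp [hW0]
    | succ k ih =>
      have h1 := hWsucc k
      have h2 := hWpos k
      have h3 : (0:ℝ) < (1/2:ℝ)^k := by positivity
      rw [pow_succ]
      nlinarith
  -- η tends to zero
  have hKtop : Tendsto K atTop atTop := by
    rw [tendsto_atTop_atTop]
    exact fun b => ⟨Q b, fun n h => hKge b n h⟩
  have hWlim : Tendsto W atTop (nhds 0) := by
    apply squeeze_zero (fun k => (hWpos k).le) hWgeo
    have := tendsto_pow_atTop_nhds_zero_of_lt_one (by norm_num : (0:ℝ) ≤ 1/2) (by norm_num)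
    have h2 := this.const_mul (ξ 0)
    simpa using h2
  have hηlim : Tendsto η atTop (nhds 0) := hWlim.comp hKtop
  -- partial sums of η : plateau formula
  have hplateau : ∀ k j, Q k ≤ j → j < Q (k+1) →
      PS η j = PS η (Q k) + ((j:ℝ) - Q k) * W k := by
    intro k j h1 h2
    have hsplit : PS η j = PS η (Q k) + ∑ i ∈ Finset.Ico (Q k + 1) (j+1), η i := by
      simp only [PS, Finset.range_eq_Ico]
      rw [← Finset.sum_Ico_consecutive η (Nat.zero_le (Q k + 1)) (by omega : Q k + 1 ≤ j + 1)]
    have hconst : ∑ i ∈ Finset.Ico (Q k + 1) (j+1), η i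
        = ((j:ℝ) - Q k) * W k := by
      have h3 : ∀ i ∈ Finset.Ico (Q k + 1) (j+1), η i = W k := by
        intro i hi
        obtain ⟨hi1, hi2⟩ := Finset.mem_Ico.mp hi
        exact hηv k i (by omega) (by omega)
      rw [Finset.sum_congr rfl h3, Finset.sum_const, Nat.card_Ico, nsmul_eq_mul]
      congr 1
      have : j + 1 - (Q k + 1) = j - Q k := by omega
      rw [this, Nat.cast_sub h1]
    rw [hsplit, hconst]
  -- the invariant
  have hInv : ∀ k, ((Pp k : ℝ)+1) * ξ 0 + ((Q k:ℝ) - Pp k) * W k ≤ PS η (Q k) := by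
    intro k
    induction k with
    | zero =>
      rw [hQ0, hPp0]
      have : PS η 0 = η 0 := by simp [PS]
      rw [this]
      have h0 : η 0 = W 0 := by have := hηQ 0; rwa [hQ0] at this
      rw [h0, hW0]
      push_cast
      simp
    | succ k ih =>
      have h1 : Q k < Q (k+1) := hQlt k
      have h2 : Q (k+1) - 1 + 1 = Q (k+1) := by omega
      have hsum1 : PS η (Q (k+1)) = PS η (Q (k+1) - 1) + η (Q (k+1)) := by
        simp only [PS]
        rw [show Q (k+1) + 1 = (Q (k+1) - 1 + 1) + 1 by omega, Finset.sum_range_succ, h2]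
      have hsum2 : PS η (Q (k+1) - 1) = PS η (Q k) + (((Q (k+1) - 1 : ℕ):ℝ) - (Q k:ℝ)) * W k :=
        hplateau k (Q (k+1) - 1) (by omega) (by omega)
      have hcast : ((Q (k+1) - 1 : ℕ):ℝ) = (Q (k+1):ℝ) - 1 := by
        rw [Nat.cast_sub (by omega)]
        norm_num
      rw [hsum1, hsum2, hηQ (k+1), hcast]
      have := hTineq k
      linarith
  -- mean domination
  have hdom : ∀ j, PS ξ j ≤ PS η j := by
    intro j
    have h1 : Q (K j) ≤ j := hKspec j
    have h2 : j < Q (K j + 1) := hKlt j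
    have h3 : Pp (K j) ≤ j := le_trans (hpq (K j)) h1
    have hA := key_bound hpos hm hns (Pp (K j)) j h3
    have hB := hInv (K j)
    rw [hplateau (K j) j h1 h2]
    have hc1 : (Pp (K j) : ℝ) ≤ (Q (K j) : ℝ) := by exact_mod_cast hpq (K j)
    have hc2 : (Q (K j) : ℝ) ≤ (j:ℝ) := by exact_mod_cast h1
    have hWk : hatSeq ξ (Pp (K j)) = W (K j) := rfl
    rw [hWk] at hA
    linarith
  have hamdom : ∀ n, am ξ n ≤ am η n := by
    intro n
    rw [am_eq, am_eq]
    have := hdom n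
    gcongr
  -- defeat all ampliation dominations
  refine ⟨η, ⟨hηnn, fun n => hηanti (Nat.le_succ n), hηlim⟩, hamdom, ?_⟩
  rintro ⟨m, hm0, C, hC, hall⟩
  set k0 := max m ⌈C⌉₊ with hk0
  obtain ⟨n, hdiv, hlt⟩ := hwitn k0
  have h1 : ρ n ≤ C * η (n / m) := hall n
  have h2 : η (n / m) ≤ η (n / (k0+1)) := by
    apply hηanti
    apply Nat.div_le_div_left _ hm0
    omega
  have h3 : η (n / (k0+1)) = W (k0+1) := by rw [hdiv]; exact hηQ (k0+1)
  have h4 : C ≤ (k0:ℝ)+1 := by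
    have := Nat.le_ceil C
    have h5 : (⌈C⌉₊:ℝ) ≤ (k0:ℝ) := by exact_mod_cast le_max_right m ⌈C⌉₊
    linarith
  have h6 : 0 < W (k0+1) := hWpos (k0+1)
  have h7 : C * η (n / m) ≤ C * W (k0+1) := by
    rw [← h3]
    exact mul_le_mul_of_nonneg_left h2 hC.le
  have h8 : C * W (k0+1) ≤ ((k0:ℝ)+1) * W (k0+1) :=
    mul_le_mul_of_nonneg_right h4 h6.le
  linarith

theorem stmt_6 (ξ : ℕ → ℝ) (hξ : IsC0Star ξ) (hns : ¬ Summable ξ) :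
    (∀ η : ℕ → ℝ, IsC0Star η → (∀ n, am ξ n ≤ am η n) →
      ∀ ε : ℝ, 0 < ε → ∃ N : ℕ, ∀ n, N ≤ n → (1 - ε) * hatSeq ξ n ≤ η n) ∧
    (∀ ρ : ℕ → ℝ, IsC0Star ρ →
      (¬ ∃ m : ℕ, 0 < m ∧ ∃ C : ℝ, 0 < C ∧ ∀ n, ρ n ≤ C * hatSeq ξ (n / m)) →
      ∃ η : ℕ → ℝ, IsC0Star η ∧ (∀ n, am ξ n ≤ am η n) ∧
        ¬ ∃ m : ℕ, 0 < m ∧ ∃ C : ℝ, 0 < C ∧ ∀ n, ρ n ≤ C * η (n / m)) := by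
  exact ⟨partI hξ hns, partII hξ hns⟩
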